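/- arXiv:1210.4314 — 2 statements merged into one kernel-verified Lean document; each statement's English description precedes it below -/
import Mathlib

section
/- Let d : 𝒞 → ℕ̄ be a dimension theory, and let (A_i, φ_{i,j})_{i ∈ I} be an inductive system of C*-algebras over a directed index set I with each A_i ∈ 𝒞 and such that the inductive limit A := lim→ A_i also lies in 𝒞. Then d(A) ≤ liminf_i d(A_i), where liminf_i d(A_i) := inf{ sup_{i ∈ J} d(A_i) : J ⊂ I cofinal }. -/
noncomputable section

open scoped Topology

universe u v w

/-! ### Covering dimension, local dimension, almost Hausdorff spaces -/

/-- `HasCovDimLE X n` : every finite open cover of `X` has a finite open refinement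
of order at most `n + 1`, i.e. the covering dimension of `X` is at most `n`. -/
def HasCovDimLE (X : Type*) [TopologicalSpace X] (n : ℕ) : Prop :=
  ∀ U : Set (Set X), U.Finite → (∀ u ∈ U, IsOpen u) → ⋃₀ U = Set.univ →
    ∃ V : Set (Set X), V.Finite ∧ (∀ v ∈ V, IsOpen v) ∧ ⋃₀ V = Set.univ ∧
      (∀ v ∈ V, ∃ u ∈ U, v ⊆ u) ∧ ∀ x : X, Set.ncard {v ∈ V | x ∈ v} ≤ n + 1

/-- The covering dimension of a topological space, valued in `ℕ∞`. -/
def covDim (X : Type*) [TopologicalSpace X] : ℕ∞ :=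
  sInf {m : ℕ∞ | ∃ n : ℕ, m = (n : ℕ∞) ∧ HasCovDimLE X n}

/-- `HasLocDimLE X n` : every point has a closed neighborhood of covering dimension `≤ n`. -/
def HasLocDimLE (X : Type*) [TopologicalSpace X] (n : ℕ) : Prop :=
  ∀ x : X, ∃ F : Set X, F ∈ 𝓝 x ∧ IsClosed F ∧ HasCovDimLE F n

/-- The local covering dimension of a topological space, valued in `ℕ∞`. -/
def locDim (X : Type*) [TopologicalSpace X] : ℕ∞ :=
  sInf {m : ℕ∞ | ∃ n : ℕ, m = (n : ℕ∞) ∧ HasLocDimLE X n}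

/-- A space is almost Hausdorff if every non-empty closed subset contains a non-empty
relatively open subset which is Hausdorff. -/
def AlmostHausdorff (X : Type*) [TopologicalSpace X] : Prop :=
  ∀ F : Set X, IsClosed F → F.Nonempty →
    ∃ G : Set X, IsOpen G ∧ (F ∩ G).Nonempty ∧ T2Space ↥(F ∩ G)

/-- Map `ℕ∞ → ℕ∞` by a function on `ℕ`, sending `∞` to `∞` (used for floor operations like
`d ↦ ⌊d/2⌋` with the convention `⌊∞/2⌋ = ∞`). -/
def enatMap (f : ℕ → ℕ) (m : ℕ∞) : ℕ∞ :=
  sInf {k : ℕ∞ | ∃ n : ℕ, m = (n : ℕ∞) ∧ k = (f n : ℕ∞)}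

/-! ### Sub-C*-algebras, ideals, hereditary and full subalgebras, approximation -/

section Subalgebras

variable {A : Type u} [NonUnitalCStarAlgebra A]

/-- `IsIdealIn J D` : `J` is a two-sided ideal in the subalgebra `D` (both regarded as
subalgebras of an ambient C*-algebra). Closed two-sided ideals of a C*-algebra are
automatically star-closed, so representing ideals as star subalgebras is no loss. -/
def IsIdealIn (J D : NonUnitalStarSubalgebra ℂ A) : Prop :=
  J ≤ D ∧ ∀ a ∈ D, ∀ x ∈ J, a * x ∈ J ∧ x * a ∈ J

/-- `IsHereditaryIn B D` : `B` is a hereditary subalgebra of the subalgebra `D`: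
whenever `a ∈ D`, `b ∈ B` and `0 ≤ a ≤ b`, then `a ∈ B`. -/
def IsHereditaryIn [PartialOrder A] [StarOrderedRing A]
    (B D : NonUnitalStarSubalgebra ℂ A) : Prop :=
  B ≤ D ∧ ∀ a ∈ D, ∀ b ∈ B, 0 ≤ a → a ≤ b → a ∈ B

/-- `IsFullIn B D` : `B` is a full subalgebra of the subalgebra `D`, i.e. `B` is contained
in no proper closed two-sided ideal of `D`. -/
def IsFullIn (B D : NonUnitalStarSubalgebra ℂ A) : Prop :=
  B ≤ D ∧ ∀ J : NonUnitalStarSubalgebra ℂ A,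
    IsClosed (J : Set A) → IsIdealIn J D → B ≤ J → D ≤ J

/-- A family of subalgebras approximates `A` if every finite subset of `A` is within `ε`
of one of the subalgebras, for every `ε > 0`. -/
def ApproximatedBy {ι : Sort v} (S : ι → NonUnitalStarSubalgebra ℂ A) : Prop :=
  ∀ F : Finset A, ∀ ε : ℝ, 0 < ε → ∃ i, ∀ x ∈ F, ∃ y ∈ S i, ‖x - y‖ < ε

/-- `ProperlyIncluded s t` : positive contractions of `s` form an approximate unit for `t`;
this is the meaning of "the inclusion `s ⊆ t` is proper". Positivity of `c` is expressed as
`c = star b * b`. -/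
def ProperlyIncluded (s t : Set A) : Prop :=
  s ⊆ t ∧ ∀ x ∈ t, ∀ ε : ℝ, 0 < ε →
    ∃ c ∈ s, (∃ b : A, c = star b * b) ∧ ‖c‖ ≤ 1 ∧ ‖c * x * c - x‖ < ε

end Subalgebras

/-- A bundled (non-unital) C*-algebra, used to quantify existentially over C*-algebras. -/
structure CStarAlgebraBundle : Type (u + 1) where
  carrier : Type u
  [str : NonUnitalCStarAlgebra carrier]

attribute [instance] CStarAlgebraBundle.str

/-- A bundled C*-algebra together with its canonical partial order (in which `0 ≤ a` iff
`a` is a sum of elements `star x * x`; such an order is unique when it exists). -/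
structure OrderedCStarAlgebraBundle : Type (u + 1) where
  carrier : Type u
  [str : NonUnitalCStarAlgebra carrier]
  [po : PartialOrder carrier]
  [sor : StarOrderedRing carrier]

attribute [instance] OrderedCStarAlgebraBundle.str OrderedCStarAlgebraBundle.po
  OrderedCStarAlgebraBundle.sor

/-! ### Representations, the primitive ideal space, CCR and type I algebras -/

/-- A representation of `A` on a complex Hilbert space (in the same universe as `A`). -/
structure HilbertRep (A : Type u) [NonUnitalCStarAlgebra A] : Type (u + 1) where
  H : Type u
  [normedAddCommGroup : NormedAddCommGroup H]
  [innerProductSpace : InnerProductSpace ℂ H]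
  [completeSpace : CompleteSpace H]
  π : A →⋆ₙₐ[ℂ] (H →L[ℂ] H)

attribute [instance] HilbertRep.normedAddCommGroup HilbertRep.innerProductSpace
  HilbertRep.completeSpace

variable {A : Type u} [NonUnitalCStarAlgebra A]

/-- (Topological) irreducibility: the representation is non-zero and has no non-trivial
closed invariant subspace. -/
def HilbertRep.IsIrreducible (ρ : HilbertRep A) : Prop :=
  (∃ a, ρ.π a ≠ 0) ∧ ∀ K : Submodule ℂ ρ.H, IsClosed (K : Set ρ.H) →
    (∀ a : A, ∀ x ∈ K, ρ.π a x ∈ K) → K = ⊥ ∨ K = ⊤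

/-- The kernel of a representation, as a subset of `A`. -/
def HilbertRep.ker (ρ : HilbertRep A) : Set A := {a : A | ρ.π a = 0}

/-- A primitive ideal is the kernel of an irreducible representation. -/
def IsPrimitiveIdeal (A : Type u) [NonUnitalCStarAlgebra A] (I : Set A) : Prop :=
  ∃ ρ : HilbertRep A, ρ.IsIrreducible ∧ I = ρ.ker

/-- The primitive ideal space of `A`. -/
def PrimSpace (A : Type u) [NonUnitalCStarAlgebra A] : Type u :=
  {I : Set A // IsPrimitiveIdeal A I}

/-- The hull-kernel (Jacobson) topology on `Prim(A)`: the closed sets are the sets of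
primitive ideals containing a given subset of `A`. -/
instance (A : Type u) [NonUnitalCStarAlgebra A] : TopologicalSpace (PrimSpace A) :=
  TopologicalSpace.generateFrom
    {U : Set (PrimSpace A) | ∃ S : Set A, U = {I : PrimSpace A | ¬ S ⊆ I.1}}

/-- The topological dimension of a C*-algebra: the supremum of the local covering dimensions
of all locally closed Hausdorff subsets of `Prim(A)`. -/
def topDim (A : Type u) [NonUnitalCStarAlgebra A] : ℕ∞ :=
  ⨆ S : {S : Set (PrimSpace A) // IsLocallyClosed S ∧ T2Space ↥S}, locDim ↥S.1

/-- `T` is a rank-one projection. -/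
def IsRankOneProjection {H : Type*} [NormedAddCommGroup H] [InnerProductSpace ℂ H]
    [CompleteSpace H] (T : H →L[ℂ] H) : Prop :=
  IsSelfAdjoint T ∧ T * T = T ∧ Module.finrank ℂ (LinearMap.range (T : H →ₗ[ℂ] H)) = 1

/-- A C*-algebra is CCR (liminal) if every irreducible representation takes values in the
compact operators. -/
def IsCCR (A : Type u) [NonUnitalCStarAlgebra A] : Prop :=
  ∀ ρ : HilbertRep A, ρ.IsIrreducible → ∀ a : A, IsCompactOperator ⇑(ρ.π a)

/-- `A` has continuous trace: the spectrum (identified with `Prim(A)`, as continuous trace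
algebras are CCR) is Hausdorff and Fell's condition holds. -/
def HasContinuousTrace (A : Type u) [NonUnitalCStarAlgebra A] : Prop :=
  T2Space (PrimSpace A) ∧
    ∀ I : PrimSpace A, ∃ U ∈ 𝓝 I, ∃ a : A, (∃ b : A, a = star b * b) ∧
      ∀ J : PrimSpace A, J ∈ U → ∀ ρ : HilbertRep A, ρ.IsIrreducible → ρ.ker = J.1 →
        IsRankOneProjection (ρ.π a)

/-- A composition series for `A` of length `μ` : an increasing, ordinal-indexed family of
closed two-sided ideals with `J μ = A`, continuous at limit ordinals. -/
def IsCompositionSeries (A : Type u) [NonUnitalCStarAlgebra A] (μ : Ordinal.{u})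
    (J : Ordinal.{u} → NonUnitalStarSubalgebra ℂ A) : Prop :=
  (∀ α, α ≤ μ → IsClosed ((J α : Set A))) ∧
  (∀ α, α ≤ μ → IsIdealIn (J α) ⊤) ∧
  (∀ α β, α ≤ β → β ≤ μ → J α ≤ J β) ∧
  J μ = ⊤ ∧
  ∀ α, α ≤ μ → Order.IsSuccLimit α →
    (J α : Set A) = closure (⋃ γ : {γ : Ordinal.{u} // γ < α}, (J γ.1 : Set A))

/-- The quotient `J' / J` is a CCR algebra, phrased via a surjective star homomorphism out of
`J'` with kernel `J`. -/
def QuotientIsCCR (J' J : NonUnitalStarSubalgebra ℂ A) : Prop :=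
  ∃ B : CStarAlgebraBundle.{u}, ∃ φ : J' →⋆ₙₐ[ℂ] B.carrier,
    Function.Surjective φ ∧ (∀ x : J', φ x = 0 ↔ (x : A) ∈ J) ∧ IsCCR B.carrier

/-- A C*-algebra is type I (postliminal) if it has a composition series starting at `0`
whose successive quotients are CCR. -/
def IsTypeI (A : Type u) [NonUnitalCStarAlgebra A] : Prop :=
  ∃ μ : Ordinal.{u}, ∃ J : Ordinal.{u} → NonUnitalStarSubalgebra ℂ A,
    IsCompositionSeries A μ J ∧ J 0 = ⊥ ∧
      ∀ α, α < μ → QuotientIsCCR (J (α + 1)) (J α)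

/-! ### Noncommutative dimension theories -/

open TopologicalSpace in
/-- `IsDimTheory Mem d` : `d` is a noncommutative dimension theory for the class `Mem` of
C*-algebras (`d` is defined as a total function; only its values on `Mem` matter). The
fields record that `Mem` is closed under isomorphism, ideals, quotients, finite direct sums
and minimal unitizations, that `d` is isomorphism invariant, and axioms (D1)-(D6). -/
structure IsDimTheory (Mem : ∀ (A : Type u) [NonUnitalCStarAlgebra A], Prop)
    (d : ∀ (A : Type u) [NonUnitalCStarAlgebra A], ℕ∞) : Prop where
  mem_iso : ∀ (A B : Type u) [NonUnitalCStarAlgebra A] [NonUnitalCStarAlgebra B],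
    (A ≃⋆ₐ[ℂ] B) → Mem A → Mem B
  mem_ideal : ∀ (A : Type u) [NonUnitalCStarAlgebra A] (J : NonUnitalStarSubalgebra ℂ A)
    (hJ : IsClosed (J : Set A)), IsIdealIn J ⊤ → Mem A → haveI := hJ; Mem J
  mem_quotient : ∀ (A B : Type u) [NonUnitalCStarAlgebra A] [NonUnitalCStarAlgebra B]
    (φ : A →⋆ₙₐ[ℂ] B), Function.Surjective φ → Mem A → Mem B
  mem_sum : ∀ (A B : Type u) [NonUnitalCStarAlgebra A] [NonUnitalCStarAlgebra B],
    Mem A → Mem B → Mem (A × B)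
  mem_unitization : ∀ (A : Type u) [NonUnitalCStarAlgebra A], Mem A → Mem (Unitization ℂ A)
  d_iso : ∀ (A B : Type u) [NonUnitalCStarAlgebra A] [NonUnitalCStarAlgebra B],
    (A ≃⋆ₐ[ℂ] B) → Mem A → d A = d B
  d1 : ∀ (A : Type u) [NonUnitalCStarAlgebra A] (J : NonUnitalStarSubalgebra ℂ A)
    (hJ : IsClosed (J : Set A)), IsIdealIn J ⊤ → Mem A → haveI := hJ; d J ≤ d A
  d2 : ∀ (A B : Type u) [NonUnitalCStarAlgebra A] [NonUnitalCStarAlgebra B]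
    (φ : A →⋆ₙₐ[ℂ] B), Function.Surjective φ → Mem A → d B ≤ d A
  d3 : ∀ (A B : Type u) [NonUnitalCStarAlgebra A] [NonUnitalCStarAlgebra B],
    Mem A → Mem B → d (A × B) = max (d A) (d B)
  d4 : ∀ (A : Type u) [NonUnitalCStarAlgebra A], Mem A → d (Unitization ℂ A) = d A
  d5 : ∀ (A : Type u) [NonUnitalCStarAlgebra A] (n : ℕ), Mem A →
    ∀ {ι : Type u} (S : ι → NonUnitalStarSubalgebra ℂ A), ApproximatedBy S →
      (∀ i, ∃ hc : IsClosed ((S i : Set A)),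
        haveI := hc; Mem (S i) ∧ d (S i) ≤ (n : ℕ∞)) →
      d A ≤ (n : ℕ∞)
  d6 : ∀ (A : Type u) [NonUnitalCStarAlgebra A] (C : NonUnitalStarSubalgebra ℂ A),
    IsClosed (C : Set A) → SeparableSpace C → Mem A →
      ∃ D : NonUnitalStarSubalgebra ℂ A, ∃ hD : IsClosed ((D : Set A)), C ≤ D ∧
        SeparableSpace D ∧ (haveI := hD; Mem D ∧ d D ≤ d A)

/-! ### Compact operators, stabilization and tensor products -/

/-- The Hilbert space `ℓ²(ℕ)`. -/
abbrev HilbertL2 : Type := lp (fun _ : ℕ => ℂ) 2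

/-- The compact operators on a Hilbert space `H`, as a subalgebra of `H →L[ℂ] H`. -/
def compactsSubalg (H : Type*) [NormedAddCommGroup H] [InnerProductSpace ℂ H]
    [CompleteSpace H] : NonUnitalStarSubalgebra ℂ (H →L[ℂ] H) where
  carrier := {T : H →L[ℂ] H | IsCompactOperator ⇑T ∧ IsCompactOperator ⇑(star T)}
  add_mem' := fun hf hg =>
    ⟨by rw [ContinuousLinearMap.coe_add']; exact hf.1.add hg.1,
     by rw [star_add, ContinuousLinearMap.coe_add']; exact hf.2.add hg.2⟩
  zero_mem' :=
    ⟨by rw [ContinuousLinearMap.coe_zero']; exact isCompactOperator_zero,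
     by rw [star_zero, ContinuousLinearMap.coe_zero']; exact isCompactOperator_zero⟩
  mul_mem' := fun {f g} hf hg =>
    ⟨by exact hf.1.comp_clm g,
     by rw [star_mul]; exact hg.2.comp_clm (star f)⟩
  smul_mem' := fun c {f} hf =>
    ⟨by rw [ContinuousLinearMap.coe_smul']; exact hf.1.smul c,
     by rw [star_smul, ContinuousLinearMap.coe_smul']; exact hf.2.smul (star c)⟩
  star_mem' := fun {f} hf => ⟨hf.2, by rw [star_star]; exact hf.1⟩

theorem compactsSubalg_isClosed (H : Type*) [NormedAddCommGroup H] [InnerProductSpace ℂ H]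
    [CompleteSpace H] : IsClosed ((compactsSubalg H : Set (H →L[ℂ] H))) := by
  have h1 : IsClosed {f : H →L[ℂ] H | IsCompactOperator ⇑f} := isClosed_setOf_isCompactOperator
  have h2 : (compactsSubalg H : Set (H →L[ℂ] H)) =
      {f : H →L[ℂ] H | IsCompactOperator ⇑f} ∩
        (star ⁻¹' {f : H →L[ℂ] H | IsCompactOperator ⇑f}) := rfl
  rw [h2]
  exact h1.inter (h1.preimage continuous_star)

/-- The C*-algebra `𝕂` of compact operators on the separable infinite-dimensional Hilbert
space `ℓ²(ℕ)`. -/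
abbrev KCompact : Type := ↥(compactsSubalg HilbertL2)

noncomputable instance : NonUnitalCStarAlgebra KCompact :=
  haveI := compactsSubalg_isClosed HilbertL2
  NonUnitalStarSubalgebra.nonUnitalCStarAlgebra _

/-- `t` realizes `T` as a C*-tensor product of `A` and `B` : `t` is a bilinear map which is
multiplicative and star preserving on elementary tensors, the induced map on the algebraic
tensor product is injective, and its range is dense in `T`. (For nuclear algebras -- e.g.
type I algebras, or when one factor is `𝕂` -- such a `T` is unique up to isomorphism.) -/
def IsCStarTensorProduct (A : Type u) (B : Type v) (T : Type w) [NonUnitalCStarAlgebra A]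
    [NonUnitalCStarAlgebra B] [NonUnitalCStarAlgebra T] (t : A →ₗ[ℂ] B →ₗ[ℂ] T) : Prop :=
  (∀ (a a' : A) (b b' : B), t a b * t a' b' = t (a * a') (b * b')) ∧
  (∀ (a : A) (b : B), star (t a b) = t (star a) (star b)) ∧
  Function.Injective (TensorProduct.lift t) ∧
  DenseRange ⇑(TensorProduct.lift t)

/-- Two C*-algebras are stably isomorphic if `A ⊗ 𝕂 ≅ B ⊗ 𝕂`. -/
def StablyIsomorphic (A B : Type u) [NonUnitalCStarAlgebra A] [NonUnitalCStarAlgebra B] :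
    Prop :=
  ∃ (TA TB : CStarAlgebraBundle.{u}) (tA : A →ₗ[ℂ] KCompact →ₗ[ℂ] TA.carrier)
    (tB : B →ₗ[ℂ] KCompact →ₗ[ℂ] TB.carrier),
    IsCStarTensorProduct A KCompact TA.carrier tA ∧
    IsCStarTensorProduct B KCompact TB.carrier tB ∧
    Nonempty (TA.carrier ≃⋆ₐ[ℂ] TB.carrier)

/-- Morita equivalence of C*-algebras, via the linking algebra picture: `A` and `B` are
Morita equivalent iff they are isomorphic to full hereditary subalgebras of a common
C*-algebra. -/
def MoritaEquivalent (A B : Type u) [NonUnitalCStarAlgebra A] [NonUnitalCStarAlgebra B] :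
    Prop :=
  ∃ C : OrderedCStarAlgebraBundle.{u},
    ∃ A' B' : NonUnitalStarSubalgebra ℂ C.carrier,
      IsClosed ((A' : Set C.carrier)) ∧ IsClosed ((B' : Set C.carrier)) ∧
      IsHereditaryIn A' ⊤ ∧ IsFullIn A' ⊤ ∧ IsHereditaryIn B' ⊤ ∧ IsFullIn B' ⊤ ∧
      Nonempty (A ≃⋆ₐ[ℂ] A') ∧ Nonempty (B ≃⋆ₐ[ℂ] B')

/-! ### Stable rank, connected stable rank, real rank -/

/-- The stable rank of a C*-algebra (`sr(A) := sr(Ã)`), valued in `ℕ∞` : the least `n` such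
that the `n`-tuples generating `Ã` as a left ideal are dense in `Ãⁿ`. -/
def stableRank (A : Type u) [NonUnitalCStarAlgebra A] : ℕ∞ :=
  sInf {m : ℕ∞ | ∃ n : ℕ, m = (n : ℕ∞) ∧
    Dense {v : Fin n → Unitization ℂ A |
      ∃ c : Fin n → Unitization ℂ A, ∑ i, c i * v i = 1}}

/-- The connected stable rank of a C*-algebra, valued in `ℕ∞`. -/
def connectedStableRank (A : Type u) [NonUnitalCStarAlgebra A] : ℕ∞ :=
  sInf {m : ℕ∞ | ∃ n : ℕ, m = (n : ℕ∞) ∧ ∀ k : ℕ, n ≤ k →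
    IsConnected {v : Fin k → Unitization ℂ A |
      ∃ c : Fin k → Unitization ℂ A, ∑ i, c i * v i = 1}}

/-- The real rank of a C*-algebra, valued in `ℕ∞` : the least `n` such that the
self-adjoint `(n+1)`-tuples generating `Ã` as a left ideal are dense in `(Ã_sa)^(n+1)`. -/
def realRank (A : Type u) [NonUnitalCStarAlgebra A] : ℕ∞ :=
  sInf {m : ℕ∞ | ∃ n : ℕ, m = (n : ℕ∞) ∧
    Dense {v : Fin (n + 1) → selfAdjoint (Unitization ℂ A) |
      ∃ c : Fin (n + 1) → Unitization ℂ A, ∑ i, c i * (v i : Unitization ℂ A) = 1}}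

end

noncomputable section


open scoped CStarAlgebra in
/-- Self-adjoint lifting with norm control: any self-adjoint element `b` admits a
self-adjoint `z` with the same image under `θ` and `‖z‖ ≤ ‖θ b‖`. -/
lemma aux_sa_lift {B A : Type*} [NonUnitalCStarAlgebra B] [NonUnitalCStarAlgebra A]
    (θ : B →⋆ₙₐ[ℂ] A) (b : B) (hb : IsSelfAdjoint b) :
    ∃ z : B, IsSelfAdjoint z ∧ θ z = θ b ∧ ‖z‖ ≤ ‖θ b‖ := by
  set N : ℝ := ‖θ b‖ with hNdef
  have hN0 : 0 ≤ N := norm_nonneg _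
  set g : ℝ → ℝ := fun t => max (-N) (min t N) with hg
  have hgc : Continuous g := continuous_const.max (continuous_id.min continuous_const)
  have hg0 : g 0 = 0 := by
    simp only [hg, min_eq_left hN0, max_eq_right_iff]
    exact neg_nonpos.mpr hN0
  have hθb : IsSelfAdjoint (θ b) := hb.map θ
  have hspec : ∀ x ∈ quasispectrum ℝ (θ b), |x| ≤ N := by
    intro x hx
    have h := norm_apply_le_norm_cfcₙ (id : ℝ → ℝ) (θ b) hx
    rw [cfcₙ_id ℝ (θ b), Real.norm_eq_abs] at h
    simpa using h
  refine ⟨cfcₙ g b, cfcₙ_predicate g b, ?_, ?_⟩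
  · have h1 : θ (cfcₙ g b) = cfcₙ g (θ b) := NonUnitalStarAlgHomClass.map_cfcₙ θ g b
    have h2 : (quasispectrum ℝ (θ b)).EqOn g id := by
      intro x hx
      have h3 := abs_le.mp (hspec x hx)
      simp [hg, min_eq_left h3.2, max_eq_right h3.1]
    rw [h1, cfcₙ_congr h2, cfcₙ_id ℝ (θ b)]
  · refine norm_cfcₙ_le fun x _ => ?_
    rw [Real.norm_eq_abs, abs_le]
    exact ⟨le_max_left _ _, max_le ((neg_nonpos.mpr hN0).trans hN0) (min_le_right _ _)⟩

open scoped CStarAlgebra in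
/-- The range of a star homomorphism between C*-algebras is closed. -/
lemma aux_isClosed_range {B A : Type*} [NonUnitalCStarAlgebra B] [NonUnitalCStarAlgebra A]
    (θ : B →⋆ₙₐ[ℂ] A) : IsClosed (Set.range ⇑θ) := by
  -- the self-adjoint part of `B` is a complete normed additive group
  have hsaB : IsClosed ((selfAdjoint B : Set B)) := by
    have : (selfAdjoint B : Set B) = {x : B | star x = x} := by
      ext x; exact selfAdjoint.mem_iff
    rw [this]
    exact isClosed_eq continuous_star continuous_id
  haveI : CompleteSpace ↥(selfAdjoint B) := hsaB.completeSpace_coe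
  -- the induced normed group homomorphism
  set Θ : NormedAddGroupHom ↥(selfAdjoint B) A :=
    AddMonoidHom.mkNormedAddGroupHom
      { toFun := fun z => θ z.1
        map_zero' := by simp
        map_add' := fun x y => by simp }
      1 (fun z => by
          simpa using NonUnitalStarAlgHom.norm_apply_le θ z.1) with hΘ
  set K : AddSubgroup A := AddSubgroup.map (AddMonoidHom.mk' (⇑θ) (map_add θ))
    (selfAdjoint B) with hK
  have hyp : Θ.SurjectiveOnWith K 1 := by
    rintro h hh
    obtain ⟨b, hb, rfl⟩ := hh
    obtain ⟨z, hz1, hz2, hz3⟩ := aux_sa_lift θ b hb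
    exact ⟨⟨z, hz1⟩, hz2, by simpa using hz3⟩
  have key := controlled_closure_of_complete (f := Θ) (K := K) one_pos one_pos hyp
  -- real/imaginary decomposition
  set p1 : A → A := fun a => (2:ℂ)⁻¹ • (a + star a) with hp1
  set p2 : A → A := fun a => (2:ℂ)⁻¹ • ((-Complex.I) • (a - star a)) with hp2
  have hc1 : Continuous p1 := (continuous_id.add continuous_star).const_smul _
  have hc2 : Continuous p2 := ((continuous_id.sub continuous_star).const_smul _).const_smul _
  refine isClosed_of_closure_subset fun y hy => ?_
  have hmem : ∀ (q : A → A) (qB : B → B), Continuous q → (∀ x : B, q (θ x) = θ (qB x)) →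
      (∀ x : B, IsSelfAdjoint (qB x)) → q y ∈ closure (K : Set A) := by
    intro q qB hq hcomm hsa
    have h1 : q y ∈ closure (q '' Set.range ⇑θ) :=
      image_closure_subset_closure_image hq ⟨y, hy, rfl⟩
    refine closure_mono ?_ h1
    rintro _ ⟨_, ⟨x, rfl⟩, rfl⟩
    exact ⟨qB x, hsa x, (hcomm x).symm⟩
  have h1 : p1 y ∈ closure (K : Set A) := by
    refine hmem p1 (fun x => (2:ℂ)⁻¹ • (x + star x)) hc1 (fun x => ?_) (fun x => ?_)
    · simp [hp1, map_smul, map_add, map_star]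
    · rw [IsSelfAdjoint]
      simp only [star_smul, star_add, star_star]
      rw [add_comm (star x) x]
      congr 1
      simp [Complex.star_def, Complex.ext_iff]
  have h2 : p2 y ∈ closure (K : Set A) := by
    refine hmem p2 (fun x => (2:ℂ)⁻¹ • ((-Complex.I) • (x - star x))) hc2
      (fun x => ?_) (fun x => ?_)
    · simp [hp2, map_smul, map_sub, map_star]
    · rw [IsSelfAdjoint]
      simp only [star_smul, star_sub, star_star, star_neg]
      rw [show star ((2:ℂ)⁻¹) = (2:ℂ)⁻¹ by simp [Complex.star_def, Complex.ext_iff],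
        show star Complex.I = -Complex.I from Complex.conj_I]
      congr 1
      rw [neg_neg, neg_smul, ← smul_neg, neg_sub]
  have hdecomp : p1 y + Complex.I • p2 y = y := by
    have hIp : Complex.I • p2 y = (2:ℂ)⁻¹ • (y - star y) := by
      rw [hp2]
      rw [smul_smul, smul_smul]
      congr 1
      linear_combination (-(2:ℂ)⁻¹) * Complex.I_mul_I
    rw [hIp, hp1]
    module
  rw [← AddSubgroup.topologicalClosure_coe] at h1 h2
  obtain ⟨g1, hg1, -⟩ := key (p1 y) h1
  obtain ⟨g2, hg2, -⟩ := key (p2 y) h2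
  refine ⟨(g1 : B) + Complex.I • (g2 : B), ?_⟩
  rw [map_add, map_smul]
  have e1 : θ (g1 : B) = p1 y := hg1
  have e2 : θ (g2 : B) = p2 y := hg2
  rw [e1, e2, hdecomp]

/-- If `d` is a dimension theory and `A` is the inductive limit of an
inductive system `(Aᵢ, φᵢⱼ)` over a directed set (realized by compatible maps `ψᵢ : Aᵢ → A`
with dense union of ranges and the limit-norm condition), with all `Aᵢ` and `A` in the
class, then `d A ≤ liminf_i d (Aᵢ)`. -/
theorem stmt1 {Mem : ∀ (A : Type u) [NonUnitalCStarAlgebra A], Prop}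
    {d : ∀ (A : Type u) [NonUnitalCStarAlgebra A], ℕ∞} (hd : IsDimTheory Mem d)
    {I : Type v} [Preorder I] [IsDirected I (· ≤ ·)] [Nonempty I]
    (Ai : I → Type u) [∀ i, NonUnitalCStarAlgebra (Ai i)]
    (φ : ∀ i j, i ≤ j → (Ai i →⋆ₙₐ[ℂ] Ai j))
    (hφid : ∀ i (x : Ai i), φ i i le_rfl x = x)
    (hφcomp : ∀ i j k (hij : i ≤ j) (hjk : j ≤ k) (x : Ai i),
      φ j k hjk (φ i j hij x) = φ i k (hij.trans hjk) x)
    (A : Type u) [NonUnitalCStarAlgebra A] (ψ : ∀ i, Ai i →⋆ₙₐ[ℂ] A)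
    (hcomp : ∀ i j (hij : i ≤ j) (x : Ai i), ψ j (φ i j hij x) = ψ i x)
    (hdense : Dense (⋃ i, Set.range ⇑(ψ i)))
    (hnorm : ∀ i (x : Ai i), ‖ψ i x‖ = ⨅ j : {j : I // i ≤ j}, ‖φ i j.1 j.2 x‖)
    (hAi : ∀ i, Mem (Ai i)) (hA : Mem A) :
    d A ≤ sInf {m : ℕ∞ | ∃ J : Set I, (∀ i : I, ∃ j ∈ J, i ≤ j) ∧
      m = ⨆ j : J, d (Ai j.1)} := by
  refine le_sInf fun m hm => ?_
  obtain ⟨J, hJcof, rfl⟩ := hm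
  by_cases htop : (⨆ j : J, d (Ai j.1)) = ⊤
  · exact htop ▸ le_top
  · obtain ⟨n, hn⟩ := WithTop.ne_top_iff_exists.mp htop
    rw [← hn]
    refine hd.d5 A n hA
      (fun i : {S : NonUnitalStarSubalgebra ℂ A //
        ∃ j, j ∈ J ∧ S = NonUnitalStarAlgHom.range (ψ j)} => i.1) ?_ ?_
    · -- approximation
      intro F ε hε
      classical
      have hx : ∀ x : A, ∃ i : I, ∃ z : Ai i, ‖x - ψ i z‖ < ε := by
        intro x
        have hxc := hdense x
        rw [Metric.mem_closure_iff] at hxc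
        obtain ⟨y, hyU, hyd⟩ := hxc ε hε
        obtain ⟨s, ⟨i, rfl⟩, hys⟩ := hyU
        obtain ⟨z, rfl⟩ := hys
        exact ⟨i, z, by rwa [← dist_eq_norm]⟩
      choose ix zx hzx using hx
      obtain ⟨i0, hi0⟩ := (F.image ix).exists_le
      obtain ⟨j, hjJ, hij⟩ := hJcof i0
      refine ⟨⟨NonUnitalStarAlgHom.range (ψ j), j, hjJ, rfl⟩, fun x hxF => ?_⟩
      have hx_le : ix x ≤ j := (hi0 _ (Finset.mem_image_of_mem ix hxF)).trans hij
      refine ⟨ψ (ix x) (zx x), ?_, hzx x⟩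
      exact (NonUnitalStarAlgHom.mem_range (ψ j)).mpr
        ⟨φ (ix x) j hx_le (zx x), hcomp _ _ hx_le (zx x)⟩
    · -- each range is a closed subalgebra in the class with small dimension
      rintro ⟨S', j, hjJ, rfl⟩
      have hc : IsClosed ((NonUnitalStarAlgHom.range (ψ j) : Set A)) := by
        rw [NonUnitalStarAlgHom.coe_range]
        exact aux_isClosed_range (ψ j)
      haveI := hc
      have hsurj : Function.Surjective (NonUnitalStarAlgHom.rangeRestrict (ψ j)) := by
        rintro ⟨y, hy⟩
        obtain ⟨x, hx⟩ := (NonUnitalStarAlgHom.mem_range (ψ j)).mp hy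
        exact ⟨x, Subtype.ext hx⟩
      refine ⟨hc, ?_, ?_⟩
      · exact hd.mem_quotient (Ai j) _ (NonUnitalStarAlgHom.rangeRestrict (ψ j)) hsurj (hAi j)
      · calc d ↥(NonUnitalStarAlgHom.range (ψ j))
            ≤ d (Ai j) :=
              hd.d2 (Ai j) _ (NonUnitalStarAlgHom.rangeRestrict (ψ j)) hsurj (hAi j)
          _ ≤ ⨆ jj : J, d (Ai jj.1) := le_iSup (fun jj : J => d (Ai jj.1)) ⟨j, hjJ⟩
          _ = (n : ℕ∞) := hn.symm

end
end

section
/- Let A be a C*-algebra, let B ⊂ A be a full, hereditary sub-C*-algebra, and let C ⊂ A be a separable sub-C*-algebra. Then there exists a separable sub-C*-algebra D ⊂ A containing C such that D ∩ B is a full, hereditary sub-C*-algebra of D. -/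
noncomputable section


section Auxiliary

open TopologicalSpace

/-- The subsemigroup closure of a countable set is countable. -/
lemma countable_subsemigroup_closure {M : Type*} [Mul M] {s : Set M} (hs : s.Countable) :
    ((Subsemigroup.closure s : Subsemigroup M) : Set M).Countable := by
  let W : ℕ → Set M := fun n => Nat.rec s (fun _ Wn => Wn ∪ Set.image2 (· * ·) Wn Wn) n
  have hWsucc : ∀ n, W (n + 1) = W n ∪ Set.image2 (· * ·) (W n) (W n) := fun n => rfl
  have hWc : ∀ n, (W n).Countable := by
    intro n
    induction n with
    | zero => exact hs
    | succ n ih => exact ih.union (ih.image2 ih _)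
  have hmono : Monotone W := monotone_nat_of_le_succ fun n => by
    rw [hWsucc]; exact Set.subset_union_left
  let U : Subsemigroup M :=
    { carrier := ⋃ n, W n
      mul_mem' := by
        intro a b ha hb
        obtain ⟨m, ham⟩ := Set.mem_iUnion.1 ha
        obtain ⟨n, hbn⟩ := Set.mem_iUnion.1 hb
        refine Set.mem_iUnion.2 ⟨max m n + 1, ?_⟩
        rw [hWsucc]
        exact Or.inr (Set.mem_image2_of_mem (hmono (le_max_left m n) ham)
          (hmono (le_max_right m n) hbn)) }
  have hle : Subsemigroup.closure s ≤ U :=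
    Subsemigroup.closure_le.2 (Set.subset_iUnion W 0)
  exact (Set.countable_iUnion hWc).mono hle

/-- Any element of `adjoin ℂ s` lies in the adjoin of a finite subset of `s`. -/
lemma exists_finset_adjoin {A : Type u} [NonUnitalCStarAlgebra A] {s : Set A} {x : A}
    (hx : x ∈ NonUnitalStarAlgebra.adjoin ℂ s) :
    ∃ t : Finset A, ↑t ⊆ s ∧ x ∈ NonUnitalStarAlgebra.adjoin ℂ (↑t : Set A) := by
  classical
  have hmono : ∀ t u : Finset A, t ⊆ u →
      NonUnitalStarAlgebra.adjoin ℂ (↑t : Set A) ≤ NonUnitalStarAlgebra.adjoin ℂ (↑u : Set A) :=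
    fun t u h => NonUnitalStarAlgebra.adjoin_le
      ((Finset.coe_subset.2 h).trans (NonUnitalStarAlgebra.subset_adjoin ℂ _))
  induction hx using NonUnitalStarAlgebra.adjoin_induction with
  | mem x hx =>
      exact ⟨{x}, by simpa using hx,
        NonUnitalStarAlgebra.subset_adjoin ℂ _ (by simp)⟩
  | add x y hx hy ihx ihy =>
      obtain ⟨t₁, ht₁, hx₁⟩ := ihx
      obtain ⟨t₂, ht₂, hx₂⟩ := ihy
      refine ⟨t₁ ∪ t₂, ?_, add_mem (hmono _ _ Finset.subset_union_left hx₁)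
        (hmono _ _ Finset.subset_union_right hx₂)⟩
      rw [Finset.coe_union]
      exact Set.union_subset ht₁ ht₂
  | zero => exact ⟨∅, by simp, zero_mem _⟩
  | mul x y hx hy ihx ihy =>
      obtain ⟨t₁, ht₁, hx₁⟩ := ihx
      obtain ⟨t₂, ht₂, hx₂⟩ := ihy
      refine ⟨t₁ ∪ t₂, ?_, mul_mem (hmono _ _ Finset.subset_union_left hx₁)
        (hmono _ _ Finset.subset_union_right hx₂)⟩
      rw [Finset.coe_union]
      exact Set.union_subset ht₁ ht₂
  | smul r x hx ih =>
      obtain ⟨t, ht, hxt⟩ := ih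
      exact ⟨t, ht, SMulMemClass.smul_mem r hxt⟩
  | star x hx ih =>
      obtain ⟨t, ht, hxt⟩ := ih
      exact ⟨t, ht, star_mem hxt⟩

end Auxiliary

/-- Given a full hereditary sub-C*-algebra `B ⊆ A` and a separable
sub-C*-algebra `C ⊆ A`, there is a separable sub-C*-algebra `D ⊆ A` containing `C` such
that `D ∩ B` is a full hereditary sub-C*-algebra of `D`. -/
theorem stmt2 (A : Type u) [NonUnitalCStarAlgebra A] [PartialOrder A] [StarOrderedRing A]
    (B C : NonUnitalStarSubalgebra ℂ A)
    (hBc : IsClosed (B : Set A)) (hBher : IsHereditaryIn B ⊤) (hBfull : IsFullIn B ⊤)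
    (hCc : IsClosed (C : Set A)) (hCsep : TopologicalSpace.SeparableSpace C) :
    ∃ D : NonUnitalStarSubalgebra ℂ A, IsClosed (D : Set A) ∧
      TopologicalSpace.SeparableSpace D ∧ C ≤ D ∧
      IsHereditaryIn (D ⊓ B) D ∧ IsFullIn (D ⊓ B) D := by
  classical
  -- The (algebraic) ideal-like set generated by `B`.
  set T : Set A := {x | ∃ b, b ∈ B ∧ (x = b ∨ (∃ a, x = a * b) ∨ (∃ c, x = b * c) ∨
    (∃ a c, x = a * b * c))} with hTdef
  have hBT : ∀ b ∈ B, b ∈ T := fun b hb => ⟨b, hb, Or.inl rfl⟩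
  have hTl : ∀ (a : A), ∀ x ∈ T, a * x ∈ T := by
    rintro a x ⟨b, hb, h | ⟨a', rfl⟩ | ⟨c, rfl⟩ | ⟨a', c, rfl⟩⟩
    · exact ⟨b, hb, Or.inr (Or.inl ⟨a, by rw [h]⟩)⟩
    · exact ⟨b, hb, Or.inr (Or.inl ⟨a * a', by simp [mul_assoc]⟩)⟩
    · exact ⟨b, hb, Or.inr (Or.inr (Or.inr ⟨a, c, by simp [mul_assoc]⟩))⟩
    · exact ⟨b, hb, Or.inr (Or.inr (Or.inr ⟨a * a', c, by simp [mul_assoc]⟩))⟩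
  have hTr : ∀ (a : A), ∀ x ∈ T, x * a ∈ T := by
    rintro a x ⟨b, hb, h | ⟨a', rfl⟩ | ⟨c, rfl⟩ | ⟨a', c, rfl⟩⟩
    · exact ⟨b, hb, Or.inr (Or.inr (Or.inl ⟨a, by rw [h]⟩))⟩
    · exact ⟨b, hb, Or.inr (Or.inr (Or.inr ⟨a', a, rfl⟩))⟩
    · exact ⟨b, hb, Or.inr (Or.inr (Or.inl ⟨c * a, by simp [mul_assoc]⟩))⟩
    · exact ⟨b, hb, Or.inr (Or.inr (Or.inr ⟨a', c * a, by simp [mul_assoc]⟩))⟩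
  set J0 := NonUnitalStarAlgebra.adjoin ℂ T with hJ0def
  have hIdeal0 : ∀ x ∈ J0, ∀ a : A, a * x ∈ J0 ∧ x * a ∈ J0 := by
    intro x hx
    induction hx using NonUnitalStarAlgebra.adjoin_induction with
    | mem x hx =>
        exact fun a => ⟨NonUnitalStarAlgebra.subset_adjoin ℂ T (hTl a x hx),
          NonUnitalStarAlgebra.subset_adjoin ℂ T (hTr a x hx)⟩
    | add x y hx hy ihx ihy =>
        exact fun a => ⟨by rw [mul_add]; exact add_mem (ihx a).1 (ihy a).1,
          by rw [add_mul]; exact add_mem (ihx a).2 (ihy a).2⟩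
    | zero => exact fun a => ⟨by rw [mul_zero]; exact zero_mem J0, by rw [zero_mul]; exact zero_mem J0⟩
    | mul x y hx hy ihx ihy =>
        exact fun a => ⟨by rw [← mul_assoc]; exact mul_mem (ihx a).1 hy,
          by rw [mul_assoc]; exact mul_mem hx (ihy a).2⟩
    | smul r x hx ih =>
        exact fun a => ⟨by rw [mul_smul_comm]; exact SMulMemClass.smul_mem r (ih a).1,
          by rw [smul_mul_assoc]; exact SMulMemClass.smul_mem r (ih a).2⟩
    | star x hx ih =>
        refine fun a => ⟨?_, ?_⟩
        · have : a * star x = star (x * star a) := by simp [star_mul]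
          rw [this]; exact star_mem (ih (star a)).2
        · have : star x * a = star (star a * x) := by simp [star_mul]
          rw [this]; exact star_mem (ih (star a)).1
  set Jc := J0.topologicalClosure with hJcdef
  have hJcc : IsClosed (Jc : Set A) := J0.isClosed_topologicalClosure
  have hJcIdeal : IsIdealIn Jc ⊤ := by
    refine ⟨le_top, fun a _ x hx => ?_⟩
    have hx' : x ∈ closure (J0 : Set A) := hx
    exact ⟨map_mem_closure (continuous_mul_left a) hx' (fun y hy => (hIdeal0 y hy a).1),
      map_mem_closure (f := fun y => y * a) (continuous_mul_right a) hx' (fun y hy => (hIdeal0 y hy a).2)⟩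
  have hBJc : B ≤ Jc := fun b hb =>
    subset_closure (NonUnitalStarAlgebra.subset_adjoin ℂ T (hBT b hb))
  have htop : ∀ a : A, a ∈ closure (J0 : Set A) := fun a =>
    hBfull.2 Jc hJcc hJcIdeal hBJc (show a ∈ (⊤ : NonUnitalStarSubalgebra ℂ A) from trivial)
  -- choose a decomposition of each element of `T`
  have hpick : ∀ w : A, ∃ p : A × A × A, w ∈ T → p.2.1 ∈ B ∧
      (w = p.2.1 ∨ w = p.1 * p.2.1 ∨ w = p.2.1 * p.2.2 ∨ w = p.1 * p.2.1 * p.2.2) := by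
    intro w
    by_cases hw : w ∈ T
    · obtain ⟨b, hb, h | ⟨a, h⟩ | ⟨c, h⟩ | ⟨a, c, h⟩⟩ := hw
      · exact ⟨(0, b, 0), fun _ => ⟨hb, Or.inl h⟩⟩
      · exact ⟨(a, b, 0), fun _ => ⟨hb, Or.inr (Or.inl h)⟩⟩
      · exact ⟨(0, b, c), fun _ => ⟨hb, Or.inr (Or.inr (Or.inl h))⟩⟩
      · exact ⟨(a, b, c), fun _ => ⟨hb, Or.inr (Or.inr (Or.inr h))⟩⟩
    · exact ⟨(0, 0, 0), fun h => absurd h hw⟩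
  choose p hp using hpick
  -- approximate any element by an element of the adjoin of a finite subset of `T`
  have key : ∀ (d : A) (k : ℕ), ∃ (t : Finset A) (x : A), ‖d - x‖ < 1 / (k + 1) ∧
      x ∈ NonUnitalStarAlgebra.adjoin ℂ (↑t : Set A) ∧ ↑t ⊆ T := by
    intro d k
    have hε : (0 : ℝ) < 1 / (k + 1) := by positivity
    obtain ⟨x, hx, hxd⟩ := Metric.mem_closure_iff.1 (htop d) _ hε
    obtain ⟨t, htT, hxt⟩ := exists_finset_adjoin hx
    exact ⟨t, x, by rwa [dist_eq_norm] at hxd, hxt, htT⟩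
  choose gen elt helt1 helt2 hgenT using key
  -- components used in the approximation of `d` at precision `1/(k+1)`
  set comps : A → ℕ → Set A := fun d k =>
    ⋃ w ∈ (gen d k : Set A), {(p w).1, (p w).2.1, (p w).2.2} with hcompsdef
  have hcomps_c : ∀ d k, (comps d k).Countable := fun d k =>
    ((gen d k).finite_toSet.biUnion (fun w _ =>
      ((Set.finite_singleton _).insert _).insert _)).countable
  -- a countable dense subset of C
  obtain ⟨s₀, hs₀c, hs₀d⟩ := TopologicalSpace.exists_countable_dense ↥C
  -- the tower of countable sets
  set S : ℕ → Set A := fun n => Nat.rec (Subtype.val '' s₀)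
    (fun _ Sn => Sn ∪ ⋃ d ∈ Sn, ⋃ k : ℕ, comps d k) n with hSdef
  have hSsucc : ∀ n, S (n + 1) = S n ∪ ⋃ d ∈ S n, ⋃ k : ℕ, comps d k := fun n => rfl
  have hSc : ∀ n, (S n).Countable := by
    intro n
    induction n with
    | zero => exact hs₀c.image _
    | succ n ih =>
        rw [hSsucc]
        exact ih.union (ih.biUnion (fun d _ => Set.countable_iUnion (fun k => hcomps_c d k)))
  set Sω : Set A := ⋃ n, S n with hSωdef
  have hSωc : Sω.Countable := Set.countable_iUnion hSc
  set D := (NonUnitalStarAlgebra.adjoin ℂ Sω).topologicalClosure with hDdef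
  have hDc : IsClosed (D : Set A) := NonUnitalStarSubalgebra.isClosed_topologicalClosure _
  have hSωD : Sω ⊆ (D : Set A) := fun x hx =>
    subset_closure (NonUnitalStarAlgebra.subset_adjoin ℂ Sω hx)
  -- separability
  have hDsep : TopologicalSpace.SeparableSpace D := by
    have hstar : (star Sω : Set A) = star '' Sω := by
      ext x
      simp only [Set.mem_star, Set.mem_image]
      exact ⟨fun h => ⟨star x, h, star_star x⟩, by rintro ⟨y, hy, rfl⟩; simpa using hy⟩
    have hcount : (Sω ∪ star Sω).Countable := by
      rw [hstar]; exact hSωc.union (hSωc.image _)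
    have hsub : ((Subsemigroup.closure (Sω ∪ star Sω) : Subsemigroup A) : Set A).Countable :=
      countable_subsemigroup_closure hcount
    have hspan : TopologicalSpace.IsSeparable
        ((Submodule.span ℂ ((Subsemigroup.closure (Sω ∪ star Sω) : Subsemigroup A) : Set A)
          : Submodule ℂ A) : Set A) :=
      hsub.isSeparable.span
    have hadj : ((NonUnitalStarAlgebra.adjoin ℂ Sω : NonUnitalStarSubalgebra ℂ A) : Set A) =
        ((Submodule.span ℂ ((Subsemigroup.closure (Sω ∪ star Sω) : Subsemigroup A) : Set A)
          : Submodule ℂ A) : Set A) := by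
      rw [← NonUnitalStarAlgebra.adjoin_eq_span]; rfl
    have h1 : TopologicalSpace.IsSeparable
        ((NonUnitalStarAlgebra.adjoin ℂ Sω : NonUnitalStarSubalgebra ℂ A) : Set A) := by
      rw [hadj]; exact hspan
    have h2 : TopologicalSpace.IsSeparable (D : Set A) := h1.closure
    exact h2.separableSpace
  -- C ≤ D
  have hCD : C ≤ D := by
    intro x hx
    have h1 : (⟨x, hx⟩ : ↥C) ∈ closure s₀ := hs₀d _
    rw [closure_subtype] at h1
    have h2 : closure (Subtype.val '' s₀) ⊆ (D : Set A) :=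
      closure_minimal (fun y hy => hSωD (Set.mem_iUnion.2 ⟨0, hy⟩)) hDc
    exact h2 h1
  refine ⟨D, hDc, hDsep, hCD, ?_, ?_⟩
  · -- hereditary
    refine ⟨inf_le_left, fun a ha b hb h0 hab => ?_⟩
    exact NonUnitalStarAlgebra.mem_inf.2
      ⟨ha, hBher.2 a trivial b (NonUnitalStarAlgebra.mem_inf.1 hb).2 h0 hab⟩
  · -- full
    refine ⟨inf_le_left, fun J hJclosed hJideal hBJ => ?_⟩
    have hSωJ : ∀ d ∈ Sω, d ∈ J := by
      intro d hd
      obtain ⟨n, hdn⟩ := Set.mem_iUnion.1 hd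
      -- approximation at every precision lies in J
      have happrox : ∀ k : ℕ, elt d k ∈ J := by
        intro k
        have hcomp : comps d k ⊆ Sω := by
          intro y hy
          refine Set.mem_iUnion.2 ⟨n + 1, ?_⟩
          rw [hSsucc]
          exact Or.inr (Set.mem_biUnion hdn (Set.mem_iUnion.2 ⟨k, hy⟩))
        have hwJ : ∀ w ∈ (gen d k : Set A), w ∈ J := by
          intro w hw
          obtain ⟨hbB, hform⟩ := hp w (hgenT d k hw)
          have hmemc : ∀ z ∈ ({(p w).1, (p w).2.1, (p w).2.2} : Set A), z ∈ (D : Set A) :=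
            fun z hz => hSωD (hcomp (Set.mem_biUnion hw hz))
          have haD : (p w).1 ∈ D := hmemc _ (by simp)
          have hbD : (p w).2.1 ∈ D := hmemc _ (by simp)
          have hcD : (p w).2.2 ∈ D := hmemc _ (by simp)
          have hbJ : (p w).2.1 ∈ J := hBJ (NonUnitalStarAlgebra.mem_inf.2 ⟨hbD, hbB⟩)
          rcases hform with h | h | h | h
          · rw [h]; exact hbJ
          · rw [h]; exact (hJideal.2 _ haD _ hbJ).1
          · rw [h]; exact (hJideal.2 _ hcD _ hbJ).2
          · rw [h]; exact (hJideal.2 _ hcD _ (hJideal.2 _ haD _ hbJ).1).2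
        exact NonUnitalStarAlgebra.adjoin_le hwJ (helt2 d k)
      have hdc : d ∈ closure (J : Set A) := by
        rw [Metric.mem_closure_iff]
        intro ε hε
        obtain ⟨k, hk⟩ := exists_nat_one_div_lt hε
        exact ⟨elt d k, happrox k, by rw [dist_eq_norm]; exact lt_trans (helt1 d k) hk⟩
      rwa [hJclosed.closure_eq] at hdc
    have hadjJ : NonUnitalStarAlgebra.adjoin ℂ Sω ≤ J :=
      NonUnitalStarAlgebra.adjoin_le hSωJ
    exact NonUnitalStarSubalgebra.topologicalClosure_minimal _ hadjJ hJclosed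

end
end
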